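/- The chain category ℤ_⊗ is freely generated as a category by the morphisms (i, ∅) : i → i − 1 and (i, I_k) : i → i − k − 1 for i ∈ ℤ and k ≥ 1. That is, every morphism of ℤ_⊗ other than an identity can be written uniquely as a composite of these generating morphisms. -/

import Mathlib

/-- Generators of the monoid `M`: the letter `s` and letters `I n` for `n ≥ 1`. -/
inductive MGen : Type
  | s : MGen
  | I : ℕ+ → MGen

/-- The relations `I n ∘ I m = I (n + m)`. -/
def MRel : FreeMonoid MGen → FreeMonoid MGen → Prop := fun a b =>
  ∃ n m : ℕ+, a = FreeMonoid.of (MGen.I n) * FreeMonoid.of (MGen.I m) ∧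
    b = FreeMonoid.of (MGen.I (n + m))

/-- The monoid `M = Mon(s, Iₙ : n ≥ 1)/(Iₙ ∘ Iₘ = I_{n+m})`. -/
abbrev M : Type := (conGen MRel).Quotient

/-- The element `s` of `M`. -/
def Ms : M := (conGen MRel).mk' (FreeMonoid.of MGen.s)

/-- The element `Iₙ` of `M`. -/
def MI (n : ℕ+) : M := (conGen MRel).mk' (FreeMonoid.of (MGen.I n))

/-- The operation `V ⊗ W = V ∘ s ∘ W` on `M`, which is the composition of the chain
category `ℤ_⊗`. -/
def otimes (V W : M) : M := V * Ms * W

namespace Stmt5Aux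

/-- Normal forms: an optional leading `I`-block, then for each `s` an optional `I`-block. -/
abbrev NN : Type := Option ℕ+ × List (Option ℕ+)

/-- Concatenation of optional `I`-blocks. -/
def ocat : Option ℕ+ → Option ℕ+ → Option ℕ+
  | none, b => b
  | some n, none => some n
  | some n, some m => some (n + m)

/-- Prepend a letter to a normal form. -/
def pre : MGen → NN → NN
  | MGen.s, (a, L) => (none, a :: L)
  | MGen.I n, (a, L) => (ocat (some n) a, L)

/-- Prepend an optional `I`-block. -/
def preO : Option ℕ+ → NN → NN
  | none, z => z
  | some n, z => pre (MGen.I n) z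

def step (l : Option ℕ+) (acc : NN) : NN := pre MGen.s (preO l acc)

/-- "Multiplication" of normal forms. -/
def emb : NN → NN → NN
  | (a, L), z => preO a (L.foldr step z)

/-- Normal form of a word. -/
def go : List MGen → NN := List.foldr pre (none, [])

def f (w : FreeMonoid MGen) : NN := go w.toList

lemma preI_preO (k : ℕ+) (a : Option ℕ+) (X : NN) :
    pre (MGen.I k) (preO a X) = preO (ocat (some k) a) X := by
  cases a with
  | none => rfl
  | some m =>
    obtain ⟨c, K⟩ := X
    show (ocat (some k) (ocat (some m) c), K) = (ocat (some (k + m)) c, K)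
    cases c with
    | none => rfl
    | some p =>
      simp only [ocat, Prod.mk.injEq, Option.some.injEq, and_true]
      rw [add_assoc]

lemma pre_emb (g : MGen) (n : NN) (z : NN) : pre g (emb n z) = emb (pre g n) z := by
  obtain ⟨a, L⟩ := n
  cases g with
  | s => rfl
  | I k => exact preI_preO k a (L.foldr step z)

lemma foldr_pre_eq_emb (l : List MGen) (z : NN) : l.foldr pre z = emb (go l) z := by
  induction l with
  | nil => rfl
  | cons g l ih =>
    show pre g (l.foldr pre z) = emb (pre g (go l)) z
    rw [ih, pre_emb]

lemma go_append (l₁ l₂ : List MGen) : go (l₁ ++ l₂) = emb (go l₁) (go l₂) := by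
  rw [go, List.foldr_append, foldr_pre_eq_emb]
  rfl

lemma f_mul (x y : FreeMonoid MGen) : f (x * y) = emb (f x) (f y) := by
  simp only [f, FreeMonoid.toList_mul, go_append]

lemma frel : ∀ a b, conGen MRel a b → f a = f b := by
  intro a b h
  induction h with
  | of x y hxy =>
    obtain ⟨n, m, rfl, rfl⟩ := hxy
    rw [f_mul]
    rfl
  | refl => rfl
  | symm _ ih => exact ih.symm
  | trans _ _ ih₁ ih₂ => exact ih₁.trans ih₂
  | mul _ _ ih₁ ih₂ => rw [f_mul, f_mul, ih₁, ih₂]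

/-- The normal-form map on `M`. -/
def fbar (V : M) : NN := Con.liftOn V f frel

lemma fbar_mk (w : FreeMonoid MGen) : fbar ((conGen MRel).mk' w) = f w := rfl

lemma fbar_mul (x y : M) : fbar (x * y) = emb (fbar x) (fbar y) := by
  refine Con.induction_on₂ x y fun w z => ?_
  show fbar ((w * z : FreeMonoid MGen) : M) = _
  rw [show ((w * z : FreeMonoid MGen) : M) = (conGen MRel).mk' (w * z) from rfl, fbar_mk, f_mul]
  rfl

/-- Decoding an optional block. -/
def iota : Option ℕ+ → M
  | none => 1
  | some n => MI n

/-- Decoding a normal form. -/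
def dec (n : NN) : M := (n.2.map iota).foldl otimes (iota n.1)

lemma MI_mul (n m : ℕ+) : MI n * MI m = MI (n + m) := by
  refine Con.eq _ |>.2 ?_
  exact ConGen.Rel.of _ _ ⟨n, m, rfl, rfl⟩

lemma mul_foldl (L : List M) : ∀ c d : M, c * L.foldl otimes d = L.foldl otimes (c * d) := by
  induction L with
  | nil => intro c d; rfl
  | cons x L ih =>
    intro c d
    show c * L.foldl otimes (otimes d x) = L.foldl otimes (otimes (c * d) x)
    rw [ih]
    congr 1
    simp only [otimes, mul_assoc]

lemma dec_pre (g : MGen) (n : NN) : dec (pre g n) = (conGen MRel).mk' (FreeMonoid.of g) * dec n := by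
  obtain ⟨a, L⟩ := n
  cases g with
  | s =>
    show (List.map iota (a :: L)).foldl otimes (iota none) = Ms * dec (a, L)
    show List.foldl otimes (otimes (iota none) (iota a)) (L.map iota) = _
    have h : otimes (iota none) (iota a) = Ms * iota a := by simp [otimes, iota]
    rw [dec, mul_foldl, h]
  | I k =>
    show (L.map iota).foldl otimes (iota (ocat (some k) a)) = MI k * dec (a, L)
    have h : iota (ocat (some k) a) = MI k * iota a := by
      cases a with
      | none => simp [ocat, iota]
      | some m => simp [ocat, iota, MI_mul]
    rw [dec, mul_foldl, h]

lemma dec_go (l : List MGen) : dec (go l) = (conGen MRel).mk' (FreeMonoid.ofList l) := by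
  induction l with
  | nil => rfl
  | cons g l ih =>
    show dec (pre g (go l)) = _
    rw [dec_pre, ih]
    rfl

lemma dec_fbar (V : M) : dec (fbar V) = V := by
  refine Con.induction_on V fun w => ?_
  show dec (f w) = _
  rw [f, dec_go]
  rfl

lemma S1 (K : List (Option ℕ+)) : ∀ T, K.foldr step (none, T) = (none, K ++ T) := by
  induction K with
  | nil => intro T; rfl
  | cons c K ih =>
    intro T
    show step c (K.foldr step (none, T)) = _
    rw [ih]
    cases c with
    | none => rfl
    | some n => rfl

lemma preO_none (c : Option ℕ+) (X : List (Option ℕ+)) : preO c (none, X) = (c, X) := by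
  cases c <;> rfl

lemma E1 (b : Option ℕ+) (K : List (Option ℕ+)) :
    emb (b, K) (none, [none]) = (b, K ++ [none]) := by
  show preO b (K.foldr step (none, [none])) = _
  rw [S1, preO_none]

lemma E2 (b : Option ℕ+) (K : List (Option ℕ+)) (l : Option ℕ+) :
    emb (b, K ++ [none]) (l, []) = (b, K ++ [l]) := by
  have h1 : (K ++ [none]).foldr step (l, []) = (none, K ++ [l]) := by
    rw [List.foldr_append, show List.foldr step (l, []) [none] = (none, [l]) from rfl, S1]
  show preO b (List.foldr step (l, []) (K ++ [none])) = (b, K ++ [l])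
  rw [h1, preO_none]

lemma fbar_iota (b : Option ℕ+) : fbar (iota b) = (b, []) := by
  cases b with
  | none => rfl
  | some n => rfl

lemma fbar_Ms : fbar Ms = (none, [none]) := rfl

lemma fbar_dec (b : Option ℕ+) (L : List (Option ℕ+)) : fbar (dec (b, L)) = (b, L) := by
  induction L using List.reverseRecOn with
  | nil => exact fbar_iota b
  | append_singleton K l ih =>
    have hdec : dec (b, K ++ [l]) = dec (b, K) * Ms * iota l := by
      show ((K ++ [l]).map iota).foldl otimes (iota b) = _
      rw [List.map_append, List.foldl_append]
      rfl
    rw [hdec, fbar_mul, fbar_mul, ih, fbar_Ms, fbar_iota, E1, E2]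

lemma exists_iota {x : M} (h : x = 1 ∨ ∃ n : ℕ+, x = MI n) : ∃ b, x = iota b := by
  rcases h with rfl | ⟨n, rfl⟩
  · exact ⟨none, rfl⟩
  · exact ⟨some n, rfl⟩

lemma exists_map_iota {L : List M} (h : ∀ x ∈ L, x = 1 ∨ ∃ n : ℕ+, x = MI n) :
    ∃ K : List (Option ℕ+), L = K.map iota := by
  induction L with
  | nil => exact ⟨[], rfl⟩
  | cons x L ih =>
    obtain ⟨K, hK⟩ := ih fun y hy => h y (List.mem_cons_of_mem _ hy)
    obtain ⟨b, hb⟩ := exists_iota (h x List.mem_cons_self)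
    exact ⟨b :: K, by simp [hb, hK]⟩

end Stmt5Aux

open Stmt5Aux in
/-- the chain category `ℤ_⊗` is freely generated by the morphisms
`(i, ∅)` and `(i, I_k)`.  Since a morphism with source `i` is determined by its label
`V ∈ M` and composition is given by `⊗`, this says: every `V ∈ M` can be written
uniquely as an iterated `⊗`-product of a nonempty list of generators taken from
`{∅} ∪ {I_k : k ≥ 1}` (a nonempty list is recorded as a head together with a tail). -/
theorem stmt5 : ∀ V : M, ∃! p : M × List M,
    (p.1 = 1 ∨ ∃ n : ℕ+, p.1 = MI n) ∧
    (∀ x ∈ p.2, x = 1 ∨ ∃ n : ℕ+, x = MI n) ∧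
    p.2.foldl otimes p.1 = V := by
  intro V
  refine ⟨(iota (fbar V).1, ((fbar V).2).map iota), ⟨?_, ?_, ?_⟩, ?_⟩
  · cases h : (fbar V).1 with
    | none => exact Or.inl rfl
    | some n => exact Or.inr ⟨n, rfl⟩
  · intro x hx
    obtain ⟨b, _, rfl⟩ := List.mem_map.1 hx
    cases b with
    | none => exact Or.inl rfl
    | some n => exact Or.inr ⟨n, rfl⟩
  · have : dec (fbar V) = V := dec_fbar V
    simpa [dec] using this
  · rintro ⟨q1, q2⟩ ⟨h1, h2, h3⟩
    obtain ⟨b, rfl⟩ := exists_iota h1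
    obtain ⟨K, rfl⟩ := exists_map_iota h2
    have hV : dec (b, K) = V := h3
    have : fbar V = (b, K) := by rw [← hV, fbar_dec]
    rw [this]
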